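/- If (u, σ, θ) solves dσ/dη = u − σ, ν dθ/dη = σu − 1, σ = e^{−αθ}u^n with u, σ > 0, then the functions a = 1/σ and b = 1/(σu) satisfy the planar autonomous system da/dη = a(1 − a²/b), db/dη = (α/(νn))(c_ν b − 1 − ((n+1)/α)ν a²), where c_ν = 1 + ν(n+1)/α. -/

import Mathlib

/-- The change of variables a = 1/σ, b = 1/(σu) transforms the autonomous system
into the planar system for (a, b). -/
theorem stmt_16 (α n ν : ℝ) (hα : 0 < α) (hn : 0 < n) (hν : 0 < ν)
    (u σ θ : ℝ → ℝ)
    (hpos_u : ∀ η : ℝ, 0 < u η) (hpos_σ : ∀ η : ℝ, 0 < σ η)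
    (hdiff_u : Differentiable ℝ u) (hdiff_σ : Differentiable ℝ σ)
    (hdiff_θ : Differentiable ℝ θ)
    (heq : ∀ η : ℝ,
      deriv σ η = u η - σ η ∧
      ν * deriv θ η = σ η * u η - 1 ∧
      σ η = Real.exp (-(α * θ η)) * (u η) ^ n) :
    ∀ η : ℝ,
      deriv (fun s => 1 / σ s) η
        = (1 / σ η) * (1 - (1 / σ η) ^ 2 / (1 / (σ η * u η))) ∧
      deriv (fun s => 1 / (σ s * u s)) η
        = (α / (ν * n)) * ((1 + ν * (n + 1) / α) * (1 / (σ η * u η)) - 1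
            - ((n + 1) / α) * ν * (1 / σ η) ^ 2) := by
  intro η
  obtain ⟨hd1, hd2, _⟩ := heq η
  have hσne : σ η ≠ 0 := (hpos_σ η).ne'
  have hune : u η ≠ 0 := (hpos_u η).ne'
  have hσ' : HasDerivAt σ (deriv σ η) η := (hdiff_σ η).hasDerivAt
  have hu' : HasDerivAt u (deriv u η) η := (hdiff_u η).hasDerivAt
  have hθ' : HasDerivAt θ (deriv θ η) η := (hdiff_θ η).hasDerivAt
  -- log relation: log σ = -(α θ) + n log u
  have hlog : ∀ s : ℝ, Real.log (σ s) = -(α * θ s) + n * Real.log (u s) := by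
    intro s
    rw [(heq s).2.2, Real.log_mul (Real.exp_ne_zero _)
      ((Real.rpow_pos_of_pos (hpos_u s) n).ne'), Real.log_exp,
      Real.log_rpow (hpos_u s)]
  have hL : HasDerivAt (fun s => Real.log (σ s)) ((σ η)⁻¹ * deriv σ η) η := by
    simpa [Function.comp_def] using (Real.hasDerivAt_log hσne).comp η hσ'
  have hR : HasDerivAt (fun s => -(α * θ s) + n * Real.log (u s))
      (-(α * deriv θ η) + n * ((u η)⁻¹ * deriv u η)) η := by
    have h1 : HasDerivAt (fun s => Real.log (u s)) ((u η)⁻¹ * deriv u η) η := by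
      simpa [Function.comp_def] using (Real.hasDerivAt_log hune).comp η hu'
    exact ((hθ'.const_mul α).neg).add (h1.const_mul n)
  have hE : (σ η)⁻¹ * deriv σ η = -(α * deriv θ η) + n * ((u η)⁻¹ * deriv u η) := by
    have hfun : (fun s => Real.log (σ s)) = fun s => -(α * θ s) + n * Real.log (u s) :=
      funext hlog
    rw [hfun] at hL
    exact hL.unique hR
  constructor
  · have h : HasDerivAt (fun s => (σ s)⁻¹) (-(deriv σ η) / (σ η) ^ 2) η := hσ'.inv hσne
    have h' : deriv (fun s => 1 / σ s) η = -(deriv σ η) / (σ η) ^ 2 := by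
      simpa [one_div] using h.deriv
    rw [h', hd1]
    field_simp
    ring
  · have hprod : HasDerivAt (fun s => σ s * u s)
        (deriv σ η * u η + σ η * deriv u η) η := hσ'.mul hu'
    have h : HasDerivAt (fun s => (σ s * u s)⁻¹)
        (-(deriv σ η * u η + σ η * deriv u η) / (σ η * u η) ^ 2) η :=
      hprod.inv (mul_ne_zero hσne hune)
    have h' : deriv (fun s => 1 / (σ s * u s)) η
        = -(deriv σ η * u η + σ η * deriv u η) / (σ η * u η) ^ 2 := by
      simpa [one_div] using h.deriv
    rw [h']
    have hθval : deriv θ η = (σ η * u η - 1) / ν := by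
      field_simp
      linarith [hd2]
    have huval : deriv u η = (u η / n) * ((u η - σ η) / σ η + α * ((σ η * u η - 1) / ν)) := by
      rw [← hθval, ← hd1]
      field_simp at hE ⊢
      linarith [hE]
    rw [huval, hd1]
    field_simp
    ring
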